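/- Let N ≥ 2 and let f_{j,0}: ℝ² → ℝ for 0 ≤ j ≤ N each be a polynomial of total degree at most N (with f_{j,0} := 0 for j outside this range). Define φ_{j,1} := ((j+1)/2) ∂_x f_{j+1,0} + ((N−j)/2) ∂_y f_{j,0}, φ_{j,2} := (1/2) Σ_{a=0}^{2} C(j+a, a) C(N−j−a, 2−a) ∂_x^a ∂_y^{2−a} f_{j+a,0} (with C the binomial coefficient, 0 for invalid entries, and φ_{−1,2} := 0), and the quantum correction Q_{j,2} := 2 ∂_x φ_{j−1,2} + 2 ∂_y φ_{j,2} + ∂_x² φ_{j,1} + ∂_y² φ_{j,1}. Then for every 0 ≤ j ≤ N−1, the function ∂_x^{N−1−j} ∂_y^j Q_{j,2} vanishes identically on ℝ². -/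

import Mathlib

noncomputable section

/-- Partial derivative with respect to `x` of a function on `ℝ²`. -/
def pdx (f : ℝ × ℝ → ℝ) : ℝ × ℝ → ℝ := fun q => fderiv ℝ f q (1, 0)

/-- Partial derivative with respect to `y` of a function on `ℝ²`. -/
def pdy (f : ℝ × ℝ → ℝ) : ℝ × ℝ → ℝ := fun q => fderiv ℝ f q (0, 1)

/-- Binomial coefficient with integer entries, equal to `0` when the lower entry is
negative or exceeds the upper entry. -/
def intChoose (n k : ℤ) : ℝ :=
  if 0 ≤ k ∧ k ≤ n then (n.toNat.choose k.toNat : ℝ) else 0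

/-- `φ_{j,1} = ((j+1)/2) ∂_x f_{j+1,0} + ((N−j)/2) ∂_y f_{j,0}`. -/
def phi1 (N : ℕ) (f0 : ℤ → ℝ × ℝ → ℝ) (j : ℤ) : ℝ × ℝ → ℝ := fun q =>
  ((j : ℝ) + 1) / 2 * pdx (f0 (j + 1)) q + ((N : ℝ) - (j : ℝ)) / 2 * pdy (f0 j) q

/-- `φ_{j,2} = (1/2) Σ_{a=0}^{2} C(j+a,a) C(N−j−a,2−a) ∂_x^a ∂_y^{2−a} f_{j+a,0}`,
with the convention `φ_{−1,2} = 0`. -/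
def phi2 (N : ℕ) (f0 : ℤ → ℝ × ℝ → ℝ) (j : ℤ) : ℝ × ℝ → ℝ :=
  if j = -1 then 0 else fun q =>
    (1 / 2) * ∑ a ∈ Finset.range 3,
      intChoose (j + (a : ℤ)) (a : ℤ) * intChoose ((N : ℤ) - j - (a : ℤ)) (2 - (a : ℤ)) *
        (pdx^[a] (pdy^[2 - a] (f0 (j + (a : ℤ))))) q

/-- The quantum correction `Q_{j,2} = 2∂_x φ_{j−1,2} + 2∂_y φ_{j,2} + ∂_x² φ_{j,1} + ∂_y² φ_{j,1}`. -/
def Q2 (N : ℕ) (f0 : ℤ → ℝ × ℝ → ℝ) (j : ℤ) : ℝ × ℝ → ℝ := fun q =>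
  2 * pdx (phi2 N f0 (j - 1)) q + 2 * pdy (phi2 N f0 j) q +
    (pdx^[2] (phi1 N f0 j)) q + (pdy^[2] (phi1 N f0 j)) q

/-- if each `f_{j,0}` (for `0 ≤ j ≤ N`, zero outside this range) is a
polynomial of total degree at most `N`, then `∂_x^{N−1−j} ∂_y^j Q_{j,2}` vanishes
identically for every `0 ≤ j ≤ N−1`. -/
def mder (cab : ℝ) (a b : ℕ) (q : ℝ × ℝ) : ℝ × ℝ →L[ℝ] ℝ :=
  (cab * q.1 ^ a) • (((b : ℝ) * q.2 ^ (b - 1)) • ContinuousLinearMap.snd ℝ ℝ ℝ) +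
    q.2 ^ b • (cab • (((a : ℝ) * q.1 ^ (a - 1)) • ContinuousLinearMap.fst ℝ ℝ ℝ))

lemma mono_hasfd (cab : ℝ) (a b : ℕ) (q : ℝ × ℝ) :
    HasFDerivAt (fun p : ℝ × ℝ => cab * p.1 ^ a * p.2 ^ b) (mder cab a b q) q := by
  have hx : HasFDerivAt (fun p : ℝ × ℝ => p.1 ^ a)
      (((a : ℝ) * q.1 ^ (a - 1)) • ContinuousLinearMap.fst ℝ ℝ ℝ) q :=
    (hasDerivAt_pow a q.1).comp_hasFDerivAt q hasFDerivAt_fst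
  have hy : HasFDerivAt (fun p : ℝ × ℝ => p.2 ^ b)
      (((b : ℝ) * q.2 ^ (b - 1)) • ContinuousLinearMap.snd ℝ ℝ ℝ) q :=
    (hasDerivAt_pow b q.2).comp_hasFDerivAt q hasFDerivAt_snd
  exact (hx.const_mul cab).mul hy

lemma mder_apply_x (cab : ℝ) (a b : ℕ) (q : ℝ × ℝ) :
    mder cab a b q (1, 0) = cab * ((a : ℝ) * q.1 ^ (a - 1)) * q.2 ^ b := by
  simp [mder]; ring

lemma mder_apply_y (cab : ℝ) (a b : ℕ) (q : ℝ × ℝ) :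
    mder cab a b q (0, 1) = cab * q.1 ^ a * ((b : ℝ) * q.2 ^ (b - 1)) := by
  simp [mder]

def IsPolyLT (d : ℕ) (f : ℝ × ℝ → ℝ) : Prop :=
  ∃ c : ℕ → ℕ → ℝ, ∀ q : ℝ × ℝ,
    f q = ∑ a ∈ Finset.range d, ∑ b ∈ Finset.range (d - a), c a b * q.1 ^ a * q.2 ^ b

lemma isPolyLT_zero (d : ℕ) : IsPolyLT d (fun _ => 0) :=
  ⟨fun _ _ => 0, by simp⟩

lemma isPolyLT_zero' (d : ℕ) : IsPolyLT d 0 :=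
  ⟨fun _ _ => 0, by simp⟩

lemma IsPolyLT.eq_zero {f : ℝ × ℝ → ℝ} (h : IsPolyLT 0 f) : ∀ q, f q = 0 := by
  obtain ⟨c, hc⟩ := h
  intro q; simpa using hc q

lemma IsPolyLT.mono {d e : ℕ} {f : ℝ × ℝ → ℝ} (h : IsPolyLT d f) (hde : d ≤ e) :
    IsPolyLT e f := by
  obtain ⟨c, hc⟩ := h
  refine ⟨fun a b => if a < d ∧ b < d - a then c a b else 0, fun q => ?_⟩
  rw [hc q]
  rw [← Finset.sum_subset (Finset.range_subset_range.2 hde) (by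
    intro a _ ha
    simp only [Finset.mem_range, not_lt] at ha
    apply Finset.sum_eq_zero
    intro b _
    have hcond : ¬(a < d ∧ b < d - a) := by omega
    simp [hcond])]
  apply Finset.sum_congr rfl
  intro a ha
  simp only [Finset.mem_range] at ha
  rw [← Finset.sum_subset (Finset.range_subset_range.2 (by omega : d - a ≤ e - a)) (by
    intro b _ hb
    simp only [Finset.mem_range, not_lt] at hb
    have hcond : ¬(a < d ∧ b < d - a) := by omega
    simp [hcond])]
  apply Finset.sum_congr rfl
  intro b hb
  simp only [Finset.mem_range] at hb
  have hcond : a < d ∧ b < d - a := ⟨ha, hb⟩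
  simp [hcond]

lemma IsPolyLT.add {d : ℕ} {f g : ℝ × ℝ → ℝ} (hf : IsPolyLT d f) (hg : IsPolyLT d g) :
    IsPolyLT d (fun q => f q + g q) := by
  obtain ⟨c, hc⟩ := hf
  obtain ⟨c', hc'⟩ := hg
  refine ⟨fun a b => c a b + c' a b, fun q => ?_⟩
  simp only [hc q, hc' q, ← Finset.sum_add_distrib]
  apply Finset.sum_congr rfl (fun a _ => Finset.sum_congr rfl (fun b _ => by ring))

lemma IsPolyLT.const_mul {d : ℕ} {f : ℝ × ℝ → ℝ} (hf : IsPolyLT d f) (r : ℝ) :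
    IsPolyLT d (fun q => r * f q) := by
  obtain ⟨c, hc⟩ := hf
  refine ⟨fun a b => r * c a b, fun q => ?_⟩
  simp only [hc q, Finset.mul_sum]
  apply Finset.sum_congr rfl (fun a _ => Finset.sum_congr rfl (fun b _ => by ring))

lemma isPolyLT_sum {d : ℕ} {ι : Type*} (s : Finset ι) (F : ι → ℝ × ℝ → ℝ)
    (h : ∀ i ∈ s, IsPolyLT d (F i)) : IsPolyLT d (fun q => ∑ i ∈ s, F i q) := by
  classical
  induction s using Finset.induction_on with
  | empty => simpa using isPolyLT_zero d
  | @insert x s hx ih =>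
    simp only [Finset.sum_insert hx]
    exact (h x (Finset.mem_insert_self x s)).add
      (ih (fun i hi => h i (Finset.mem_insert_of_mem hi)))

lemma sum_range_shift {n : ℕ} {h : ℕ → ℝ} (h0 : h 0 = 0) :
    ∑ b ∈ Finset.range n, h b = ∑ b ∈ Finset.range (n - 1), h (b + 1) := by
  cases n with
  | zero => simp
  | succ m => rw [Finset.sum_range_succ']; simp [h0]

lemma hasfd_sum (c : ℕ → ℕ → ℝ) (d : ℕ) (q : ℝ × ℝ) :
    HasFDerivAt
      (fun p : ℝ × ℝ => ∑ a ∈ Finset.range d, ∑ b ∈ Finset.range (d - a),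
        c a b * p.1 ^ a * p.2 ^ b)
      (∑ a ∈ Finset.range d, ∑ b ∈ Finset.range (d - a), mder (c a b) a b q) q :=
  HasFDerivAt.fun_sum fun a _ => HasFDerivAt.fun_sum fun b _ => mono_hasfd (c a b) a b q

lemma pdx_sum (c : ℕ → ℕ → ℝ) (d : ℕ) (q : ℝ × ℝ) :
    pdx (fun p : ℝ × ℝ => ∑ a ∈ Finset.range d, ∑ b ∈ Finset.range (d - a),
        c a b * p.1 ^ a * p.2 ^ b) q
      = ∑ a ∈ Finset.range d, ∑ b ∈ Finset.range (d - a),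
          c a b * ((a : ℝ) * q.1 ^ (a - 1)) * q.2 ^ b := by
  rw [pdx, (hasfd_sum c d q).fderiv]
  simp [ContinuousLinearMap.sum_apply, mder_apply_x]

lemma pdy_sum (c : ℕ → ℕ → ℝ) (d : ℕ) (q : ℝ × ℝ) :
    pdy (fun p : ℝ × ℝ => ∑ a ∈ Finset.range d, ∑ b ∈ Finset.range (d - a),
        c a b * p.1 ^ a * p.2 ^ b) q
      = ∑ a ∈ Finset.range d, ∑ b ∈ Finset.range (d - a),
          c a b * q.1 ^ a * ((b : ℝ) * q.2 ^ (b - 1)) := by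
  rw [pdy, (hasfd_sum c d q).fderiv]
  simp [ContinuousLinearMap.sum_apply, mder_apply_y]

lemma IsPolyLT.pdx {d : ℕ} {f : ℝ × ℝ → ℝ} (h : IsPolyLT d f) :
    IsPolyLT (d - 1) (pdx f) := by
  obtain ⟨c, hc⟩ := h
  have hf : f = fun p : ℝ × ℝ => ∑ a ∈ Finset.range d, ∑ b ∈ Finset.range (d - a),
      c a b * p.1 ^ a * p.2 ^ b := funext hc
  subst hf
  refine ⟨fun a b => ((a : ℝ) + 1) * c (a + 1) b, fun q => ?_⟩
  rw [pdx_sum]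
  cases d with
  | zero => simp
  | succ e =>
    rw [Finset.sum_range_succ']
    simp only [Nat.cast_zero, zero_mul, mul_zero, zero_mul, Finset.sum_const_zero, add_zero,
      Nat.add_sub_cancel, Nat.succ_sub_succ_eq_sub, Nat.sub_zero]
    apply Finset.sum_congr rfl
    intro a _
    apply Finset.sum_congr rfl
    intro b _
    push_cast
    ring

lemma IsPolyLT.pdy {d : ℕ} {f : ℝ × ℝ → ℝ} (h : IsPolyLT d f) :
    IsPolyLT (d - 1) (pdy f) := by
  obtain ⟨c, hc⟩ := h
  have hf : f = fun p : ℝ × ℝ => ∑ a ∈ Finset.range d, ∑ b ∈ Finset.range (d - a),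
      c a b * p.1 ^ a * p.2 ^ b := funext hc
  subst hf
  refine ⟨fun a b => ((b : ℝ) + 1) * c a (b + 1), fun q => ?_⟩
  rw [pdy_sum]
  have hinner : ∀ a ∈ Finset.range d,
      ∑ b ∈ Finset.range (d - a), c a b * q.1 ^ a * ((b : ℝ) * q.2 ^ (b - 1))
        = ∑ b ∈ Finset.range (d - a - 1), c a (b + 1) * q.1 ^ a * (((b : ℝ) + 1) * q.2 ^ b) := by
    intro a _
    rw [sum_range_shift (by simp)]
    apply Finset.sum_congr rfl
    intro b _
    push_cast
    ring
  rw [Finset.sum_congr rfl hinner]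
  cases d with
  | zero => simp
  | succ e =>
    rw [Finset.sum_range_succ]
    have h0 : e + 1 - e - 1 = 0 := by omega
    rw [h0]
    simp only [Nat.succ_sub_succ_eq_sub, Nat.sub_self, Nat.zero_sub, Finset.range_zero,
      Finset.sum_empty, add_zero, Nat.add_sub_cancel, Nat.sub_zero]
    apply Finset.sum_congr rfl
    intro a ha
    simp only [Finset.mem_range] at ha
    have : e + 1 - a - 1 = e - a := by omega
    rw [this]
    apply Finset.sum_congr rfl
    intro b _
    ring

lemma IsPolyLT.pdx_iter {d : ℕ} {f : ℝ × ℝ → ℝ} (h : IsPolyLT d f) (k : ℕ) :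
    IsPolyLT (d - k) (_root_.pdx^[k] f) := by
  induction k with
  | zero => simpa using h
  | succ n ih =>
    rw [Function.iterate_succ_apply']
    have := ih.pdx
    have he : d - n - 1 = d - (n + 1) := by omega
    rwa [he] at this

lemma IsPolyLT.pdy_iter {d : ℕ} {f : ℝ × ℝ → ℝ} (h : IsPolyLT d f) (k : ℕ) :
    IsPolyLT (d - k) (_root_.pdy^[k] f) := by
  induction k with
  | zero => simpa using h
  | succ n ih =>
    rw [Function.iterate_succ_apply']
    have := ih.pdy
    have he : d - n - 1 = d - (n + 1) := by omega
    rwa [he] at this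

theorem stmt_6 (N : ℕ) (hN : 2 ≤ N) (f0 : ℤ → ℝ × ℝ → ℝ)
    (hzero : ∀ j : ℤ, (j < 0 ∨ (N : ℤ) < j) → f0 j = 0)
    (hpoly : ∀ j : ℤ, 0 ≤ j → j ≤ (N : ℤ) →
      ∃ c : ℕ → ℕ → ℝ, ∀ q : ℝ × ℝ,
        f0 j q = ∑ a ∈ Finset.range (N + 1), ∑ b ∈ Finset.range (N + 1 - a),
          c a b * q.1 ^ a * q.2 ^ b) :
    ∀ j : ℕ, j < N → ∀ q : ℝ × ℝ,
      (pdx^[N - 1 - j] (pdy^[j] (Q2 N f0 (j : ℤ)))) q = 0 := by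
  -- every f0 k is a polynomial of total degree < N + 1
  have hf : ∀ k : ℤ, IsPolyLT (N + 1) (f0 k) := by
    intro k
    by_cases hk : 0 ≤ k ∧ k ≤ (N : ℤ)
    · obtain ⟨c, hc⟩ := hpoly k hk.1 hk.2
      exact ⟨c, hc⟩
    · rw [hzero k (by omega)]
      exact isPolyLT_zero' _
  have hphi1 : ∀ k : ℤ, IsPolyLT N (phi1 N f0 k) := by
    intro k
    have he : N + 1 - 1 = N := by omega
    have h1 : IsPolyLT N (pdx (f0 (k + 1))) := by
      have := (hf (k + 1)).pdx; rwa [he] at this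
    have h2 : IsPolyLT N (pdy (f0 k)) := by
      have := (hf k).pdy; rwa [he] at this
    exact (h1.const_mul _).add (h2.const_mul _)
  have hphi2 : ∀ k : ℤ, IsPolyLT (N - 1) (phi2 N f0 k) := by
    intro k
    rw [phi2]
    split
    · exact isPolyLT_zero' _
    · refine IsPolyLT.const_mul ?_ _
      refine isPolyLT_sum _ _ ?_
      intro a ha
      simp only [Finset.mem_range] at ha
      refine IsPolyLT.const_mul ?_ _
      have := ((hf (k + (a : ℤ))).pdy_iter (2 - a)).pdx_iter a
      exact this.mono (by omega)
  have hQ2 : ∀ k : ℤ, IsPolyLT (N - 2) (Q2 N f0 k) := by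
    intro k
    have hsub : N - 1 - 1 = N - 2 := by omega
    have hA : IsPolyLT (N - 2) (pdx (phi2 N f0 (k - 1))) := by
      have := (hphi2 (k - 1)).pdx; rwa [hsub] at this
    have hB : IsPolyLT (N - 2) (pdy (phi2 N f0 k)) := by
      have := (hphi2 k).pdy; rwa [hsub] at this
    have hC : IsPolyLT (N - 2) (pdx^[2] (phi1 N f0 k)) := by
      have := (hphi1 k).pdx_iter 2
      exact this.mono (by omega)
    have hD : IsPolyLT (N - 2) (pdy^[2] (phi1 N f0 k)) := by
      have := (hphi1 k).pdy_iter 2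
      exact this.mono (by omega)
    unfold Q2
    exact (((hA.const_mul 2).add (hB.const_mul 2)).add hC).add hD
  intro j hj q
  have h2 : IsPolyLT (N - 2 - j) (pdy^[j] (Q2 N f0 (j : ℤ))) := (hQ2 (j : ℤ)).pdy_iter j
  have h3 := h2.pdx_iter (N - 1 - j)
  have he : N - 2 - j - (N - 1 - j) = 0 := by omega
  rw [he] at h3
  exact h3.eq_zero q
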